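/- Under the PWGCO model with groups G_1,...,G_{n_G}, the D-criterion value of the uniform measure ξ_0 on the feasible permutation set equals det(M(ξ_0)) = ∏_{g=1}^{n_G} (|G_g|+1)^{|G_g|−1} / 3^{|G_g|(|G_g|−1)/2}, where M(ξ_0) = diag(1, I_1+V_1/3, ..., I_{n_G}+V_{n_G}/3) is block diagonal with one block per group. -/

import Mathlib

/-- Index type of the within-group pairs `{i < j}` (both components in a common group). -/
abbrev GPair {m n : ℕ} (G : Fin n → Finset (Fin m)) :=
  {p : Fin m × Fin m // p.1 < p.2 ∧ ∃ g, p.1 ∈ G g ∧ p.2 ∈ G g}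

/-- The moment matrix `M(ξ₀) = diag(1, I₁+V₁/3, …, I_{n_G}+V_{n_G}/3)` of the
uniform measure under the PWGCO model: leading `1×1` block `1`, zero
constant-row/column, and within the pair block the standard PWO pattern (which
is block diagonal across groups since disjoint groups share no component). -/
noncomputable def Mmom {m n : ℕ} (G : Fin n → Finset (Fin m)) :
    Matrix (Unit ⊕ GPair G) (Unit ⊕ GPair G) ℝ := fun a b =>
  match a, b with
  | Sum.inl _, Sum.inl _ => 1
  | Sum.inl _, Sum.inr _ => 0
  | Sum.inr _, Sum.inl _ => 0
  | Sum.inr p, Sum.inr q =>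
      if p = q then 1
      else if p.1.1 = q.1.1 ∨ p.1.2 = q.1.2 then 1 / 3
      else if p.1.2 = q.1.1 ∨ p.1.1 = q.1.2 then -(1 / 3)
      else 0

open Finset Matrix

section Aux

variable {m : ℕ}

abbrev SPair (S : Finset (Fin m)) := {p : Fin m × Fin m // p.1 < p.2 ∧ p.1 ∈ S ∧ p.2 ∈ S}

lemma card_SPair (S : Finset (Fin m)) :
    Fintype.card (SPair S) = S.card * (S.card - 1) / 2 := by
  classical
  have h1 : Fintype.card (SPair S)
      = ((S ×ˢ S).filter fun p => p.1 < p.2).card := by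
    rw [Fintype.card_subtype]
    congr 1
    ext p
    simp only [Finset.mem_filter, Finset.mem_product, Finset.mem_univ, true_and]
    tauto
  have h2 : ((S ×ˢ S).filter fun p => p.1 < p.2).card
      = ((S ×ˢ S).filter fun p => p.2 < p.1).card := by
    apply Finset.card_bij (fun p _ => p.swap)
    · intro a ha
      simp only [Finset.mem_filter, Finset.mem_product] at ha ⊢
      exact ⟨⟨ha.1.2, ha.1.1⟩, ha.2⟩
    · intro a _ b _ h
      exact Prod.swap_injective h
    · intro b hb
      refine ⟨b.swap, ?_, by simp⟩
      simp only [Finset.mem_filter, Finset.mem_product] at hb ⊢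
      exact ⟨⟨hb.1.2, hb.1.1⟩, hb.2⟩
  have h3 : ((S ×ˢ S).filter fun p => p.1 < p.2)
      ∪ ((S ×ˢ S).filter fun p => p.2 < p.1) = S.offDiag := by
    rw [← Finset.filter_or]
    ext p
    simp only [Finset.mem_filter, Finset.mem_product, Finset.mem_offDiag]
    constructor
    · rintro ⟨⟨h1', h2'⟩, h⟩
      exact ⟨h1', h2', by rcases h with h | h <;> [exact ne_of_lt h; exact (ne_of_lt h).symm]⟩
    · rintro ⟨h1', h2', h⟩
      exact ⟨⟨h1', h2'⟩, lt_or_gt_of_ne h⟩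
  have hdisj : Disjoint ((S ×ˢ S).filter fun p => p.1 < p.2)
      ((S ×ˢ S).filter fun p => p.2 < p.1) := by
    rw [Finset.disjoint_left]
    intro p hp hq
    simp only [Finset.mem_filter] at hp hq
    exact absurd hq.2 (asymm hp.2)
  have h4 := Finset.card_union_of_disjoint hdisj
  rw [h3] at h4
  rw [Finset.offDiag_card] at h4
  have h5 : S.card * S.card - S.card = S.card * (S.card - 1) := by
    rcases S.card with _ | t
    · simp
    · have : (t+1) * (t+1) = (t+1)*t + (t+1) := by ring
      have : (t+1) * (t+1-1) = (t+1) * t := by simp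
      omega
  omega

/-- signed incidence matrix -/
noncomputable def Cmat (S : Finset (Fin m)) : Matrix {x : Fin m // x ∈ S} (SPair S) ℝ :=
  fun i p => (if p.1.1 = (i : Fin m) then 1 else 0) - (if p.1.2 = (i : Fin m) then 1 else 0)

lemma sum_delta (S : Finset (Fin m)) {a : Fin m} (ha : a ∈ S) (c : Fin m) :
    ∑ i : {x : Fin m // x ∈ S},
      (if a = (i : Fin m) then (1:ℝ) else 0) * (if c = (i : Fin m) then 1 else 0)
      = if a = c then 1 else 0 := by
  have key : ∀ i : {x : Fin m // x ∈ S},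
      (if a = (i : Fin m) then (1:ℝ) else 0) * (if c = (i : Fin m) then 1 else 0)
      = if i = ⟨a, ha⟩ then (if a = c then 1 else 0) else 0 := by
    intro i
    by_cases h : i = ⟨a, ha⟩
    · subst h
      by_cases h2 : a = c <;> simp [h2, eq_comm]
    · have : a ≠ (i : Fin m) := fun hh => h (Subtype.ext hh.symm)
      simp [this, h]
  simp only [key]
  rw [Finset.sum_ite_eq' Finset.univ]
  simp

/-- `CᵀC = V + 2I` entrywise -/
lemma CtC_apply (S : Finset (Fin m)) (p q : SPair S) :
    ((Cmat S)ᵀ * Cmat S) p q =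
      ((if p.1.1 = q.1.1 then (1:ℝ) else 0) - (if p.1.1 = q.1.2 then 1 else 0))
      - ((if p.1.2 = q.1.1 then 1 else 0) - (if p.1.2 = q.1.2 then 1 else 0)) := by
  obtain ⟨⟨a,b⟩, hab, ha, hb⟩ := p
  obtain ⟨⟨c,d⟩, hcd, hc, hd⟩ := q
  simp only [Matrix.mul_apply, Matrix.transpose_apply, Cmat]
  simp only [sub_mul, mul_sub]
  rw [Finset.sum_sub_distrib, Finset.sum_sub_distrib, Finset.sum_sub_distrib]
  rw [sum_delta S ha c, sum_delta S ha d, sum_delta S hb c, sum_delta S hb d]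
  simp only []
  ring

noncomputable def Bmat (S : Finset (Fin m)) : Matrix (SPair S) (SPair S) ℝ := fun p q =>
  if p = q then 1
  else if p.1.1 = q.1.1 ∨ p.1.2 = q.1.2 then 1 / 3
  else if p.1.2 = q.1.1 ∨ p.1.1 = q.1.2 then -(1 / 3)
  else 0


lemma Bmat_eq (S : Finset (Fin m)) :
    Bmat S = (3⁻¹ : ℝ) • (1 + (Cmat S)ᵀ * Cmat S) := by
  ext p q
  rw [Matrix.smul_apply, Matrix.add_apply, CtC_apply, Matrix.one_apply]
  obtain ⟨⟨a,b⟩, hab, ha, hb⟩ := p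
  obtain ⟨⟨c,d⟩, hcd, hc, hd⟩ := q
  have hab' : (a:ℕ) < b := hab
  have hcd' : (c:ℕ) < d := hcd
  simp only [Bmat, Subtype.mk.injEq, Prod.mk.injEq, Fin.ext_iff]
  by_cases h1 : (a:ℕ) = c <;> by_cases h2 : (a:ℕ) = d <;>
    by_cases h3 : (b:ℕ) = c <;> by_cases h4 : (b:ℕ) = d <;>
    first
      | (exfalso; omega)
      | (simp only [h1, h2, h3, h4, hab', hcd', hab'.ne, hab'.ne', hcd'.ne, hcd'.ne', ne_eq, and_true, and_false, true_and,
          false_and, true_or, or_true, false_or, or_false, if_true, if_false,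
          not_true, not_false_iff, ite_true, ite_false, not_false_eq_true];
         norm_num)

lemma deg_card (S : Finset (Fin m)) {i : Fin m} (hi : i ∈ S) :
    (Finset.univ.filter fun p : SPair S => p.1.1 = i ∨ p.1.2 = i).card = S.card - 1 := by
  classical
  rw [← Finset.card_erase_of_mem hi]
  apply Finset.card_bij (fun p _ => if p.1.1 = i then p.1.2 else p.1.1)
  · intro p hp
    simp only [Finset.mem_filter, Finset.mem_univ, true_and] at hp
    rcases p with ⟨⟨a,b⟩, hab, haS, hbS⟩
    simp only at hp ⊢
    split_ifs with h
    · subst h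
      exact Finset.mem_erase.mpr ⟨(hab).ne', hbS⟩
    · have hb : b = i := by tauto
      subst hb
      exact Finset.mem_erase.mpr ⟨hab.ne, haS⟩
  · intro p hp q hq hfpq
    simp only [Finset.mem_filter, Finset.mem_univ, true_and] at hp hq
    rcases p with ⟨⟨a,b⟩, hab, haS, hbS⟩
    rcases q with ⟨⟨c,d⟩, hcd, hcS, hdS⟩
    simp only at hp hq hfpq ⊢
    apply Subtype.ext
    simp only [Prod.mk.injEq]
    split_ifs at hfpq with h1 h2 h2
    · subst h1; subst h2; exact ⟨rfl, hfpq⟩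
    · exfalso
      have hd : d = i := by tauto
      subst hd; subst h1; subst hfpq
      exact absurd hcd (asymm hab)
    · exfalso
      have hb : b = i := by tauto
      subst hb; subst h2; subst hfpq
      exact absurd hcd (asymm hab)
    · have hb : b = i := by tauto
      have hd : d = i := by tauto
      subst hb; subst hd; exact ⟨hfpq, rfl⟩
  · intro x hx
    rw [Finset.mem_erase] at hx
    rcases lt_trichotomy x i with h | h | h
    · refine ⟨⟨(x, i), h, hx.2, hi⟩, ?_, ?_⟩
      · simp
      · simp only [if_neg hx.1]
    · exact absurd h hx.1
    · refine ⟨⟨(i, x), h, hi, hx.2⟩, ?_, ?_⟩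
      · simp
      · simp

lemma deg_sum (S : Finset (Fin m)) {i : Fin m} (hi : i ∈ S) :
    ∑ p : SPair S, ((if p.1.1 = i then (1:ℝ) else 0) + (if p.1.2 = i then 1 else 0))
      = (S.card : ℝ) - 1 := by
  classical
  have key : ∀ p : SPair S,
      ((if p.1.1 = i then (1:ℝ) else 0) + (if p.1.2 = i then 1 else 0))
      = if p.1.1 = i ∨ p.1.2 = i then 1 else 0 := by
    intro p
    by_cases h1 : p.1.1 = i <;> by_cases h2 : p.1.2 = i <;> simp [h1, h2]
    have := p.2.1
    rw [h1, h2] at this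
    exact absurd this (lt_irrefl i)
  simp only [key]
  rw [Finset.sum_boole, deg_card S hi]
  have h1 : 1 ≤ S.card := Finset.card_pos.mpr ⟨i, hi⟩
  push_cast [Nat.cast_sub h1]
  ring

lemma pair_sum (S : Finset (Fin m)) {i j : Fin m} (hi : i ∈ S) (hj : j ∈ S) :
    ∑ p : SPair S, (if p.1.1 = i then (1:ℝ) else 0) * (if p.1.2 = j then 1 else 0)
      = if i < j then 1 else 0 := by
  classical
  by_cases hij : i < j
  · rw [if_pos hij]
    have key : ∀ p : SPair S,
        (if p.1.1 = i then (1:ℝ) else 0) * (if p.1.2 = j then 1 else 0)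
        = if p = ⟨(i,j), hij, hi, hj⟩ then 1 else 0 := by
      intro p
      by_cases h : p = ⟨(i,j), hij, hi, hj⟩
      · subst h; simp
      · have hcomp : ¬(p.1.1 = i ∧ p.1.2 = j) := by
          intro ⟨u, v⟩
          exact h (Subtype.ext (Prod.ext u v))
        by_cases h1 : p.1.1 = i <;> by_cases h2 : p.1.2 = j <;>
          simp [h1, h2, h] <;> tauto
    simp only [key]
    rw [Finset.sum_ite_eq' Finset.univ]
    simp
  · rw [if_neg hij]
    apply Finset.sum_eq_zero
    intro p _
    by_cases h1 : p.1.1 = i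
    · by_cases h2 : p.1.2 = j
      · have := p.2.1
        rw [h1, h2] at this
        exact absurd this hij
      · simp [h2]
    · simp [h1]

lemma CCt_apply (S : Finset (Fin m)) (x y : {v : Fin m // v ∈ S}) :
    (Cmat S * (Cmat S)ᵀ) x y = if x = y then (S.card : ℝ) - 1 else -1 := by
  classical
  rw [Matrix.mul_apply]
  by_cases hxy : x = y
  · subst hxy
    rw [if_pos rfl, ← deg_sum S x.2]
    apply Finset.sum_congr rfl
    intro p _
    simp only [Matrix.transpose_apply, Cmat]
    have hne := p.2.1.ne
    by_cases h1 : p.1.1 = (x : Fin m) <;> by_cases h2 : p.1.2 = (x : Fin m) <;>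
      simp [h1, h2]
    exact absurd (h1.trans h2.symm) hne
  · rw [if_neg hxy]
    have hxy' : (x : Fin m) ≠ (y : Fin m) := fun h => hxy (Subtype.ext h)
    have key : ∀ p : SPair S,
        Cmat S x p * (Cmat S)ᵀ p y
        = -((if p.1.1 = (x:Fin m) then (1:ℝ) else 0) * (if p.1.2 = (y:Fin m) then 1 else 0))
          - ((if p.1.1 = (y:Fin m) then (1:ℝ) else 0) * (if p.1.2 = (x:Fin m) then 1 else 0)) := by
      intro p
      simp only [Matrix.transpose_apply, Cmat]
      have hne := p.2.1.ne
      by_cases h1 : p.1.1 = (x:Fin m) <;> by_cases h2 : p.1.2 = (x:Fin m) <;>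
        by_cases h3 : p.1.1 = (y:Fin m) <;> by_cases h4 : p.1.2 = (y:Fin m) <;>
        simp [h1, h2, h3, h4, hxy', hxy'.symm] <;>
        (simp only [ne_eq, Fin.ext_iff] at h1 h2 h3 h4 hne hxy' ⊢; omega)
    simp only [key]
    rw [Finset.sum_sub_distrib, Finset.sum_neg_distrib]
    rw [pair_sum S x.2 y.2, pair_sum S y.2 x.2]
    rcases lt_or_gt_of_ne hxy' with h | h
    · rw [if_pos h, if_neg (asymm h)]; ring
    · rw [if_neg (asymm h), if_pos h]; ring

lemma det_Bmat (S : Finset (Fin m)) (hS : S.Nonempty) :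
    (Bmat S).det
      = ((S.card : ℝ) + 1) ^ (S.card - 1) / 3 ^ (S.card * (S.card - 1) / 2) := by
  classical
  have hk : 1 ≤ S.card := hS.card_pos
  have hcard : Fintype.card {x : Fin m // x ∈ S} = S.card := Fintype.card_coe S
  have hne0 : ((S.card:ℝ)+1) ≠ 0 := by positivity
  rw [Bmat_eq, Matrix.det_smul, card_SPair, Matrix.det_one_add_mul_comm]
  have hCC : (1 + Cmat S * (Cmat S)ᵀ)
      = ((S.card : ℝ) + 1) •
        (1 + Matrix.replicateCol Unit (fun _ : {x : Fin m // x ∈ S} => -(((S.card : ℝ) + 1)⁻¹))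
              * Matrix.replicateRow Unit (fun _ : {x : Fin m // x ∈ S} => (1:ℝ))) := by
    ext x y
    rw [Matrix.add_apply, CCt_apply]
    simp only [Matrix.smul_apply, Matrix.add_apply, Matrix.mul_apply,
      Finset.univ_unique, Finset.sum_singleton, Matrix.replicateCol_apply, Matrix.replicateRow_apply,
      Matrix.one_apply]
    by_cases hxy : x = y <;> simp [hxy] <;> field_simp <;> ring
  rw [hCC, Matrix.det_smul, hcard, Matrix.det_one_add_replicateCol_mul_replicateRow]
  have hdot : (fun _ : {x : Fin m // x ∈ S} => (1:ℝ))
        ⬝ᵥ (fun _ : {x : Fin m // x ∈ S} => -(((S.card:ℝ)+1)⁻¹))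
      = -((S.card:ℝ) * ((S.card:ℝ)+1)⁻¹) := by
    simp [dotProduct, hcard]
  rw [hdot]
  have h1 : (1 + -((S.card:ℝ) * ((S.card:ℝ)+1)⁻¹)) = ((S.card:ℝ)+1)⁻¹ := by
    field_simp
    ring
  rw [h1, pow_sub₀ _ hne0 hk]
  rw [inv_pow]
  field_simp


end Aux

/-- the D-criterion value of the uniform measure under the PWGCO
model: `det M(ξ₀) = ∏_g (|G_g|+1)^{|G_g|-1} / 3^{|G_g|(|G_g|-1)/2}`. -/
theorem stmt11 (m n : ℕ) (G : Fin n → Finset (Fin m))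
    (hdisj : ∀ g h : Fin n, g ≠ h → Disjoint (G g) (G h))
    (hcover : ∀ x : Fin m, ∃ g, x ∈ G g)
    (hne : ∀ g, (G g).Nonempty) :
    (Mmom G).det
      = ∏ g, ((G g).card + 1 : ℝ) ^ ((G g).card - 1)
          / 3 ^ ((G g).card * ((G g).card - 1) / 2) := by
  classical
  choose grp hgrp1 hgrp2 using fun p : GPair G => p.2.2
  have hmem : ∀ (x : Fin m) (g h : Fin n), x ∈ G g → x ∈ G h → g = h := by
    intro x g h h1 h2
    by_contra hgh
    exact Finset.disjoint_left.mp (hdisj g h hgh) h1 h2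
  set b : Unit ⊕ GPair G → Fin (n+1) :=
    Sum.elim (fun _ => 0) (fun p => (grp p).succ) with hb
  have key : ∀ a c, b a ≠ b c → Mmom G a c = 0 := by
    rintro (u | p) (v | q) hbc
    · exact absurd rfl hbc
    · rfl
    · rfl
    · have hg : grp p ≠ grp q := by
        intro h
        exact hbc (by simp [hb, h])
      have hx : ∀ x : Fin m, x ∈ G (grp p) → x ∈ G (grp q) → False :=
        fun x h1 h2 => hg (hmem x _ _ h1 h2)
      have h1 : p ≠ q := by
        intro h
        subst h
        exact hg rfl
      have h2 : ¬(p.1.1 = q.1.1 ∨ p.1.2 = q.1.2) := by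
        rintro (h | h)
        · exact hx p.1.1 (hgrp1 p) (by rw [h]; exact hgrp1 q)
        · exact hx p.1.2 (hgrp2 p) (by rw [h]; exact hgrp2 q)
      have h3 : ¬(p.1.2 = q.1.1 ∨ p.1.1 = q.1.2) := by
        rintro (h | h)
        · exact hx p.1.2 (hgrp2 p) (by rw [h]; exact hgrp1 q)
        · exact hx p.1.1 (hgrp1 p) (by rw [h]; exact hgrp2 q)
      show Mmom G (Sum.inr p) (Sum.inr q) = 0
      simp only [Mmom, if_neg h1, if_neg h2, if_neg h3]
  have hbt : (Mmom G).BlockTriangular b := fun i j hij => key i j (ne_of_gt hij)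
  rw [hbt.det]
  have hext : ∏ a ∈ Finset.univ.image b, ((Mmom G).toSquareBlock b a).det
      = ∏ a : Fin (n+1), ((Mmom G).toSquareBlock b a).det := by
    apply Finset.prod_subset (Finset.subset_univ _)
    intro a _ ha
    haveI : IsEmpty {x // b x = a} :=
      ⟨fun ⟨x, hx⟩ => ha (Finset.mem_image.mpr ⟨x, Finset.mem_univ _, hx⟩)⟩
    exact Matrix.det_isEmpty
  rw [hext, Fin.prod_univ_succ]
  have hzero : ((Mmom G).toSquareBlock b 0).det = 1 := by
    letI : Unique {x // b x = (0 : Fin (n+1))} :=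
      { default := ⟨Sum.inl (), rfl⟩
        uniq := by
          rintro ⟨(u | p), hx⟩
          · rfl
          · exact absurd hx (Fin.succ_ne_zero _) }
    rw [Matrix.det_unique]
    show Mmom G (Sum.inl ()) (Sum.inl ()) = 1
    rfl
  rw [hzero, one_mul]
  apply Finset.prod_congr rfl
  intro g _
  -- the block for group `g`
  have hf2aux : ∀ (p : GPair G), b (Sum.inr p) = Fin.succ g → grp p = g := by
    intro p hx
    exact Fin.succ_injective _ (by simpa [hb] using hx)
  let e : SPair (G g) ≃ {x : Unit ⊕ GPair G // b x = Fin.succ g} :=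
    { toFun := fun q =>
        ⟨Sum.inr ⟨q.1, q.2.1, ⟨g, q.2.2⟩⟩, by
          show (grp ⟨q.1, q.2.1, ⟨g, q.2.2⟩⟩).succ = Fin.succ g
          exact congrArg Fin.succ (hmem _ _ _ (hgrp1 _) q.2.2.1)⟩
      invFun := fun x =>
        match x with
        | ⟨Sum.inl _, hx⟩ => absurd hx.symm (Fin.succ_ne_zero g)
        | ⟨Sum.inr p, hx⟩ =>
            ⟨p.1, p.2.1, by
              have hgp : grp p = g := hf2aux p hx
              exact ⟨hgp ▸ hgrp1 p, hgp ▸ hgrp2 p⟩⟩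
      left_inv := fun q => Subtype.ext rfl
      right_inv := by
        rintro ⟨(u | p), hx⟩
        · exact absurd hx.symm (Fin.succ_ne_zero g)
        · exact Subtype.ext (congrArg Sum.inr (Subtype.ext rfl)) }
  have hsub : ((Mmom G).toSquareBlock b (Fin.succ g)).submatrix e e = Bmat (G g) := by
    ext p q
    show Mmom G (Sum.inr ⟨p.1, _⟩) (Sum.inr ⟨q.1, _⟩) = Bmat (G g) p q
    by_cases hpq : p = q
    · subst hpq
      simp [Mmom, Bmat]
    · have h' : (⟨p.1, p.2.1, ⟨g, p.2.2⟩⟩ : GPair G) ≠ ⟨q.1, q.2.1, ⟨g, q.2.2⟩⟩ := by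
        intro h
        exact hpq (Subtype.ext (show p.1 = q.1 from congrArg (Subtype.val : GPair G → Fin m × Fin m) h))
      show Mmom G _ _ = _
      simp only [Mmom, Bmat, if_neg h', if_neg hpq]
  calc ((Mmom G).toSquareBlock b (Fin.succ g)).det
      = (((Mmom G).toSquareBlock b (Fin.succ g)).submatrix e e).det :=
        (Matrix.det_submatrix_equiv_self e _).symm
    _ = (Bmat (G g)).det := by rw [hsub]
    _ = _ := det_Bmat (G g) (hne g)
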